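/- Λ = {Λ_i ∈ B(X, Y_i)} is a pg-frame for X with respect to {Y_i} if and only if the synthesis operator T_Λ : (Σ_i ⊕ Y_i^*)_{ℓ^q} → X^*, T_Λ{g_i} = Σ_i Λ_i^* g_i, is bounded and surjective. -/

import Mathlib

open NormedSpace Filter
open scoped ENNReal
set_option maxHeartbeats 1000000

/-- The Banach-space adjoint (dual map) of a continuous linear map. -/
noncomputable def opAdj {X Y : Type*} [NormedAddCommGroup X] [NormedSpace ℝ X]
    [NormedAddCommGroup Y] [NormedSpace ℝ Y] (T : X →L[ℝ] Y) :
    StrongDual ℝ Y →L[ℝ] StrongDual ℝ X :=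
  (ContinuousLinearMap.compL ℝ X Y ℝ).flip T

section Aux

variable {X : Type*} [NormedAddCommGroup X] [NormedSpace ℝ X]

lemma opAdj_apply {Y : Type*} [NormedAddCommGroup Y] [NormedSpace ℝ Y]
    (T : X →L[ℝ] Y) (g : StrongDual ℝ Y) (x : X) : opAdj T g x = g (T x) := rfl

lemma hasSum_eval {ι : Type*} {T : ι → StrongDual ℝ X} {S : StrongDual ℝ X} (h : HasSum T S) (x : X) :
    HasSum (fun i => T i x) (S x) :=
  (ContinuousLinearMap.apply ℝ ℝ x).hasSum h

/-- If `s ≤ M * s^(1/q)` with everything nonneg, then `s^(1/p) ≤ M`. -/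
lemma rpow_le_of_le_mul_rpow {p q s M : ℝ} (hcj : p.HolderConjugate q) (hs : 0 ≤ s)
    (hM : 0 ≤ M) (h : s ≤ M * s ^ (1 / q)) : s ^ (1 / p) ≤ M := by
  rcases eq_or_lt_of_le hs with hs0 | hs0
  · rw [← hs0, Real.zero_rpow (one_div_ne_zero hcj.ne_zero)]
    exact hM
  · have key : s ^ (1 / p) * s ^ (1 / q) = s := by
      rw [← Real.rpow_add hs0, one_div, one_div, hcj.inv_add_inv_eq_one, Real.rpow_one]
    have hq0 : (0:ℝ) < s ^ (1 / q) := Real.rpow_pos_of_pos hs0 _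
    have h2 : s ^ (1 / p) * s ^ (1 / q) ≤ M * s ^ (1 / q) := key.symm ▸ h
    exact le_of_mul_le_mul_right h2 hq0

end Aux

section Fwd

variable {X : Type*} [NormedAddCommGroup X] [NormedSpace ℝ X] [CompleteSpace X]
  {Y : ℕ → Type*} [∀ i, NormedAddCommGroup (Y i)] [∀ i, NormedSpace ℝ (Y i)]

/-- Partial sums of the synthesis operator are bounded by Hölder. -/
lemma synthesis_partial_bound {p q : ℝ} (hcj : p.HolderConjugate q) {B : ℝ} (hB : 0 ≤ B)
    (Λ : ∀ i, X →L[ℝ] Y i)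
    (hub : ∀ x : X, Summable (fun i => ‖Λ i x‖ ^ p) ∧ (∑' i, ‖Λ i x‖ ^ p) ^ (1 / p) ≤ B * ‖x‖)
    (g : ∀ i, StrongDual ℝ (Y i)) (s : Finset ℕ) :
    ‖∑ i ∈ s, opAdj (Λ i) (g i)‖ ≤ B * (∑ i ∈ s, ‖g i‖ ^ q) ^ (1 / q) := by
  rw [mul_comm]
  refine ContinuousLinearMap.opNorm_le_bound _ (by positivity) fun x => ?_
  have h1 : ‖(∑ i ∈ s, opAdj (Λ i) (g i)) x‖ ≤ ∑ i ∈ s, ‖g i‖ * ‖Λ i x‖ := by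
    rw [ContinuousLinearMap.sum_apply]
    refine (norm_sum_le _ _).trans (Finset.sum_le_sum fun i _ => ?_)
    calc ‖opAdj (Λ i) (g i) x‖ = ‖g i (Λ i x)‖ := rfl
      _ ≤ ‖g i‖ * ‖Λ i x‖ := (g i).le_opNorm _
  have h2 : ∑ i ∈ s, ‖g i‖ * ‖Λ i x‖ ≤
      (∑ i ∈ s, ‖g i‖ ^ q) ^ (1 / q) * (∑ i ∈ s, ‖Λ i x‖ ^ p) ^ (1 / p) := by
    have := Real.inner_le_Lp_mul_Lq s (fun i => ‖g i‖) (fun i => ‖Λ i x‖) hcj.symm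
    simpa [abs_norm] using this
  have h3 : (∑ i ∈ s, ‖Λ i x‖ ^ p) ^ (1 / p) ≤ B * ‖x‖ := by
    refine le_trans ?_ (hub x).2
    refine Real.rpow_le_rpow (Finset.sum_nonneg fun i _ => Real.rpow_nonneg (norm_nonneg _) _)
      (Summable.sum_le_tsum s (fun i _ => Real.rpow_nonneg (norm_nonneg _) _) (hub x).1) hcj.one_div_nonneg
  calc ‖(∑ i ∈ s, opAdj (Λ i) (g i)) x‖ ≤ ∑ i ∈ s, ‖g i‖ * ‖Λ i x‖ := h1
    _ ≤ (∑ i ∈ s, ‖g i‖ ^ q) ^ (1 / q) * (∑ i ∈ s, ‖Λ i x‖ ^ p) ^ (1 / p) := h2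
    _ ≤ (∑ i ∈ s, ‖g i‖ ^ q) ^ (1 / q) * (B * ‖x‖) := by
        refine mul_le_mul_of_nonneg_left h3 (Real.rpow_nonneg ?_ _)
        exact Finset.sum_nonneg fun i _ => Real.rpow_nonneg (norm_nonneg _) _
    _ = (∑ i ∈ s, ‖g i‖ ^ q) ^ (1 / q) * B * ‖x‖ := by ring

lemma synthesis_summable {p q : ℝ} (hcj : p.HolderConjugate q) {B : ℝ} (hB : 0 ≤ B)
    (Λ : ∀ i, X →L[ℝ] Y i)
    (hub : ∀ x : X, Summable (fun i => ‖Λ i x‖ ^ p) ∧ (∑' i, ‖Λ i x‖ ^ p) ^ (1 / p) ≤ B * ‖x‖)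
    {g : ∀ i, StrongDual ℝ (Y i)} (hg : Summable fun i => ‖g i‖ ^ q) :
    Summable (fun i => opAdj (Λ i) (g i)) ∧
      ‖∑' i, opAdj (Λ i) (g i)‖ ≤ B * (∑' i, ‖g i‖ ^ q) ^ (1 / q) := by
  have hq0 : 0 < q := hcj.symm.pos
  have hsummable : Summable (fun i => opAdj (Λ i) (g i)) := by
    rw [summable_iff_vanishing]
    intro e he
    obtain ⟨ε, hε, hball⟩ := Metric.mem_nhds_iff.1 he
    set δ : ℝ := (ε / (B + 1)) ^ q with hδ
    have hδ0 : 0 < δ := Real.rpow_pos_of_pos (by positivity) _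
    obtain ⟨s, hs⟩ := hg.vanishing (Metric.ball_mem_nhds 0 hδ0)
    refine ⟨s, fun t ht => ?_⟩
    apply hball
    rw [Metric.mem_ball, dist_zero_right]
    have htsum : ∑ i ∈ t, ‖g i‖ ^ q < δ := by
      have := hs t ht
      rw [Metric.mem_ball, dist_zero_right, Real.norm_eq_abs] at this
      exact lt_of_le_of_lt (le_abs_self _) this
    have hbound := synthesis_partial_bound hcj hB Λ hub g t
    have h4 : (∑ i ∈ t, ‖g i‖ ^ q) ^ (1 / q) ≤ δ ^ (1 / q) :=
      Real.rpow_le_rpow (Finset.sum_nonneg fun i _ => Real.rpow_nonneg (norm_nonneg _) _)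
        htsum.le hcj.symm.one_div_nonneg
    have hδq : δ ^ (1 / q) = ε / (B + 1) := by
      rw [hδ, one_div, Real.rpow_rpow_inv (by positivity) hq0.ne']
    calc ‖∑ i ∈ t, opAdj (Λ i) (g i)‖ ≤ B * (∑ i ∈ t, ‖g i‖ ^ q) ^ (1 / q) := hbound
      _ ≤ B * (ε / (B + 1)) := by
          rw [← hδq]; exact mul_le_mul_of_nonneg_left h4 hB
      _ < ε := by
          rw [mul_div_assoc']
          rw [div_lt_iff₀ (by positivity)]
          nlinarith
  refine ⟨hsummable, ?_⟩
  have htend : Tendsto (fun s : Finset ℕ => ‖∑ i ∈ s, opAdj (Λ i) (g i)‖) atTop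
      (nhds ‖∑' i, opAdj (Λ i) (g i)‖) := hsummable.hasSum.norm
  refine le_of_tendsto htend (Eventually.of_forall fun s => ?_)
  calc ‖∑ i ∈ s, opAdj (Λ i) (g i)‖ ≤ B * (∑ i ∈ s, ‖g i‖ ^ q) ^ (1 / q) :=
        synthesis_partial_bound hcj hB Λ hub g s
    _ ≤ B * (∑' i, ‖g i‖ ^ q) ^ (1 / q) := by
        refine mul_le_mul_of_nonneg_left (Real.rpow_le_rpow (Finset.sum_nonneg fun i _ =>
          Real.rpow_nonneg (norm_nonneg _) _) (Summable.sum_le_tsum s (fun i _ =>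
          Real.rpow_nonneg (norm_nonneg _) _) hg) hcj.symm.one_div_nonneg) hB

end Fwd

section Single

variable {Y : ℕ → Type*} [∀ i, NormedAddCommGroup (Y i)] [∀ i, NormedSpace ℝ (Y i)]

/-- `lp.single` as a continuous linear map. -/
noncomputable def sgl (P : ℝ≥0∞) [Fact (1 ≤ P)] (hp' : 0 < P.toReal) (i : ℕ) :
    Y i →L[ℝ] lp (fun j => Y j) P :=
  LinearMap.mkContinuous
    { toFun := fun y => lp.single P i y
      map_add' := fun a b => by
        apply lp.ext; funext j
        by_cases h : j = i
        · subst h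
          simp [lp.single_apply_self, lp.coeFn_add]
        · simp [lp.single_apply_ne P i _ h, lp.coeFn_add]
      map_smul' := fun c a => (lp.single_smul P i c a) }
    1 (fun y => by
      have h := lp.norm_single (ENNReal.toReal_pos_iff.1 hp').1 i y
      rw [one_mul]
      exact h.le)

lemma sgl_apply (P : ℝ≥0∞) [Fact (1 ≤ P)] (hp' : 0 < P.toReal) (i : ℕ) (y : Y i) :
    sgl P hp' i y = lp.single P i y := rfl

lemma norm_sgl_apply (P : ℝ≥0∞) [Fact (1 ≤ P)] (hp' : 0 < P.toReal) (i : ℕ) (y : Y i) :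
    ‖sgl P hp' i y‖ = ‖y‖ := by
  have h := lp.norm_single (ENNReal.toReal_pos_iff.1 hp').1 i y
  exact h

/-- Coordinate functionals of a bounded functional on `lp` have `q`-summable norms. -/
lemma coord_q_bound {p q : ℝ} (hcj : p.HolderConjugate q) {P : ℝ≥0∞} [Fact (1 ≤ P)] (hPt : P.toReal = p)
    (Φ : StrongDual ℝ (lp (fun j => Y j) P)) (s : Finset ℕ) :
    ∑ i ∈ s, ‖Φ.comp (sgl P (by rw [hPt]; exact hcj.pos) i)‖ ^ q ≤ ‖Φ‖ ^ q := by
  have hp0 : 0 < p := hcj.pos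
  have hq0 : 0 < q := hcj.symm.pos
  have hp' : 0 < P.toReal := by rw [hPt]; exact hp0
  set g : ∀ i, StrongDual ℝ (Y i) := fun i => Φ.comp (sgl P hp' i) with hgdef
  set S : ℝ := ∑ i ∈ s, ‖g i‖ ^ q with hSdef
  have hS0 : 0 ≤ S := Finset.sum_nonneg fun i _ => Real.rpow_nonneg (norm_nonneg _) _
  -- main claim : S ≤ ‖Φ‖ * S ^ (1/p)
  have main : S ≤ ‖Φ‖ * S ^ (1 / p) := by
    refine le_of_forall_pos_le_add fun ε hε => ?_
    set K : ℝ := ∑ i ∈ s, ‖g i‖ ^ (q - 1) with hKdef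
    have hK0 : 0 ≤ K := Finset.sum_nonneg fun i _ => Real.rpow_nonneg (norm_nonneg _) _
    set δ : ℝ := ε / (K + 1) with hδdef
    have hδ0 : 0 < δ := by positivity
    -- choose near-norming vectors
    have hchoice : ∀ i, ∃ y : Y i, ‖y‖ ≤ 1 ∧ ‖g i‖ ≤ g i y + δ := by
      intro i
      by_cases h : ‖g i‖ ≤ δ
      · exact ⟨0, by simp, by simpa using h⟩
      · push_neg at h
        obtain ⟨y, hy1, hy2⟩ := (g i).exists_lt_apply_of_lt_opNorm
          (show ‖g i‖ - δ < ‖g i‖ by linarith)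
        rcases le_or_gt 0 (g i y) with hsign | hsign
        · refine ⟨y, hy1.le, ?_⟩
          rw [Real.norm_eq_abs, abs_of_nonneg hsign] at hy2
          linarith
        · refine ⟨-y, by simpa using hy1.le, ?_⟩
          rw [Real.norm_eq_abs, abs_of_neg hsign] at hy2
          rw [map_neg]
          linarith
    choose y hy1 hy2 using hchoice
    -- the test vector
    set z : lp (fun j => Y j) P := ∑ i ∈ s, lp.single P i ((‖g i‖ ^ (q - 1)) • y i) with hzdef
    have hznorm : ‖z‖ ≤ S ^ (1 / p) := by
      have hz1 : ‖z‖ ^ P.toReal = ∑ i ∈ s, ‖(‖g i‖ ^ (q - 1)) • y i‖ ^ P.toReal := by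
        have := lp.norm_sum_single hp' (fun i => (‖g i‖ ^ (q - 1)) • y i) s
        exact this
      have hz2 : ∑ i ∈ s, ‖(‖g i‖ ^ (q - 1)) • y i‖ ^ P.toReal ≤ S := by
        rw [hSdef, hPt]
        refine Finset.sum_le_sum fun i _ => ?_
        have hn : ‖(‖g i‖ ^ (q - 1)) • y i‖ ≤ ‖g i‖ ^ (q - 1) := by
          rw [norm_smul, Real.norm_eq_abs, abs_of_nonneg (Real.rpow_nonneg (norm_nonneg _) _)]
          nlinarith [Real.rpow_nonneg (norm_nonneg (g i)) (q - 1), hy1 i,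
            norm_nonneg (y i)]
        calc ‖(‖g i‖ ^ (q - 1)) • y i‖ ^ p ≤ (‖g i‖ ^ (q - 1)) ^ p :=
              Real.rpow_le_rpow (norm_nonneg _) hn hp0.le
          _ = ‖g i‖ ^ ((q - 1) * p) := (Real.rpow_mul (norm_nonneg _) _ _).symm
          _ = ‖g i‖ ^ q := by rw [hcj.symm.sub_one_mul_conj]
      have hzp : ‖z‖ ^ p ≤ S := by rw [← hPt]; exact hz1 ▸ hz2
      calc ‖z‖ = (‖z‖ ^ p) ^ (1 / p) := by
            rw [one_div, Real.rpow_rpow_inv (norm_nonneg _) hp0.ne']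
        _ ≤ S ^ (1 / p) := Real.rpow_le_rpow (Real.rpow_nonneg (norm_nonneg _) _) hzp
            (by positivity)
    have hΦz : S - δ * K ≤ Φ z := by
      have hz3 : Φ z = ∑ i ∈ s, (‖g i‖ ^ (q - 1)) * g i (y i) := by
        rw [hzdef, map_sum]
        refine Finset.sum_congr rfl fun i _ => ?_
        have : Φ (lp.single P i ((‖g i‖ ^ (q - 1)) • y i)) = g i ((‖g i‖ ^ (q - 1)) • y i) := rfl
        rw [this, map_smul, smul_eq_mul]
      rw [hz3, Finset.mul_sum, ← Finset.sum_sub_distrib]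
      refine Finset.sum_le_sum fun i _ => ?_
      have hterm : ‖g i‖ ^ q - δ * ‖g i‖ ^ (q - 1) ≤
          (‖g i‖ ^ (q - 1)) * (g i (y i)) := by
        have hgq : ‖g i‖ ^ q = ‖g i‖ ^ (q - 1) * ‖g i‖ := by
          rcases eq_or_lt_of_le (norm_nonneg (g i)) with h0 | h0
          · rw [← h0, Real.zero_rpow hq0.ne', Real.zero_rpow (by linarith [hcj.symm.lt] : q - 1 ≠ 0), zero_mul]
          · rw [← Real.rpow_add_one h0.ne' (q - 1), sub_add_cancel]
        have := hy2 i
        have hc0 : 0 ≤ ‖g i‖ ^ (q - 1) := Real.rpow_nonneg (norm_nonneg _) _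
        nlinarith
      linarith [hterm]
    have hΦz2 : Φ z ≤ ‖Φ‖ * S ^ (1 / p) := by
      calc Φ z ≤ ‖Φ z‖ := le_abs_self _
        _ ≤ ‖Φ‖ * ‖z‖ := Φ.le_opNorm z
        _ ≤ ‖Φ‖ * S ^ (1 / p) := mul_le_mul_of_nonneg_left hznorm (norm_nonneg _)
    have hδK : δ * K ≤ ε := by
      rw [hδdef]
      rw [div_mul_eq_mul_div, div_le_iff₀ (by positivity)]
      nlinarith
    linarith
  -- conclude
  have h5 : S ^ (1 / q) ≤ ‖Φ‖ := rpow_le_of_le_mul_rpow hcj.symm hS0 (norm_nonneg _) main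
  calc S = (S ^ (1 / q)) ^ q := by rw [one_div, Real.rpow_inv_rpow hS0 hq0.ne']
    _ ≤ ‖Φ‖ ^ q := Real.rpow_le_rpow (Real.rpow_nonneg hS0 _) h5 hq0.le

end Single

/-- `Λ` is a pg-frame for `X` iff the synthesis operator
`T_Λ {gᵢ} = Σᵢ Λᵢ* gᵢ` is (well defined and) bounded and surjective onto `X*`. -/
theorem pgFrame_iff_synthesis_bounded_surjective
    {X : Type*} [NormedAddCommGroup X] [NormedSpace ℝ X] [CompleteSpace X]
    {Y : ℕ → Type*} [∀ i, NormedAddCommGroup (Y i)] [∀ i, NormedSpace ℝ (Y i)]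
    [∀ i, CompleteSpace (Y i)]
    (p q : ℝ) (hp : 1 < p) (hpq : 1 / p + 1 / q = 1)
    (Λ : ∀ i, X →L[ℝ] Y i) :
    (∃ A B : ℝ, 0 < A ∧ 0 < B ∧ ∀ x : X, Summable (fun i => ‖Λ i x‖ ^ p) ∧
        A * ‖x‖ ≤ (∑' i, ‖Λ i x‖ ^ p) ^ (1 / p) ∧
        (∑' i, ‖Λ i x‖ ^ p) ^ (1 / p) ≤ B * ‖x‖) ↔
      ((∀ g : ∀ i, StrongDual ℝ (Y i), Summable (fun i => ‖g i‖ ^ q) →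
          Summable (fun i => opAdj (Λ i) (g i))) ∧
        (∃ C > (0 : ℝ), ∀ g : ∀ i, StrongDual ℝ (Y i), Summable (fun i => ‖g i‖ ^ q) →
          ‖∑' i, opAdj (Λ i) (g i)‖ ≤ C * (∑' i, ‖g i‖ ^ q) ^ (1 / q)) ∧
        (∀ f : StrongDual ℝ X, ∃ g : ∀ i, StrongDual ℝ (Y i),
          Summable (fun i => ‖g i‖ ^ q) ∧ (∑' i, opAdj (Λ i) (g i)) = f)) := by
  have hcj : p.HolderConjugate q := Real.holderConjugate_iff.2 ⟨hp, by simpa [one_div] using hpq⟩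
  have hp0 : 0 < p := hcj.pos
  have hq : 1 < q := hcj.symm.lt
  have hq0 : 0 < q := hcj.symm.pos
  set P : ℝ≥0∞ := ENNReal.ofReal p with hPdef
  set Q : ℝ≥0∞ := ENNReal.ofReal q with hQdef
  have hPt : P.toReal = p := ENNReal.toReal_ofReal hp0.le
  have hQt : Q.toReal = q := ENNReal.toReal_ofReal hq0.le
  have hp' : 0 < P.toReal := by rw [hPt]; exact hp0
  have hq' : 0 < Q.toReal := by rw [hQt]; exact hq0
  haveI factP : Fact (1 ≤ P) := ⟨ENNReal.one_le_ofReal.2 hp.le⟩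
  haveI factQ : Fact (1 ≤ Q) := ⟨ENNReal.one_le_ofReal.2 hq.le⟩
  constructor
  · -- forward direction
    rintro ⟨A, B, hA, hB, hf⟩
    have hub : ∀ x : X, Summable (fun i => ‖Λ i x‖ ^ p) ∧
        (∑' i, ‖Λ i x‖ ^ p) ^ (1 / p) ≤ B * ‖x‖ := fun x => ⟨(hf x).1, (hf x).2.2⟩
    refine ⟨fun g hg => (synthesis_summable hcj hB.le Λ hub hg).1,
      ⟨B, hB, fun g hg => (synthesis_summable hcj hB.le Λ hub hg).2⟩, ?_⟩
    intro f
    -- the analysis operator `U`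
    let U : X →ₗ[ℝ] lp (fun i => Y i) P :=
      { toFun := fun x => ⟨fun i => Λ i x, memℓp_gen (by simpa [hPt] using (hf x).1)⟩
        map_add' := fun a b => by
          apply lp.ext; funext i
          simp only [lp.coeFn_add, Pi.add_apply, map_add]
        map_smul' := fun c a => by
          apply lp.ext; funext i
          simp only [lp.coeFn_smul, Pi.smul_apply, map_smul, RingHom.id_apply] }
    have hUx : ∀ x : X, ‖U x‖ = (∑' i, ‖Λ i x‖ ^ p) ^ (1 / p) := fun x => by
      have := lp.norm_eq_tsum_rpow hp' (U x)
      rw [hPt] at this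
      exact this
    have hlow : ∀ x : X, A * ‖x‖ ≤ ‖U x‖ := fun x => by rw [hUx]; exact (hf x).2.1
    have hinj : Function.Injective U := by
      intro a b hab
      have h1 : U (a - b) = 0 := by rw [map_sub, hab, sub_self]
      have h2 := hlow (a - b)
      rw [h1, norm_zero] at h2
      have h3 : ‖a - b‖ = 0 := le_antisymm (by nlinarith [norm_nonneg (a - b)]) (norm_nonneg _)
      exact sub_eq_zero.1 (norm_eq_zero.1 h3)
    let e : X ≃ₗ[ℝ] LinearMap.range U := LinearEquiv.ofInjective U hinj
    let φ₀ : LinearMap.range U →ₗ[ℝ] ℝ := f.toLinearMap.comp e.symm.toLinearMap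
    have hφ₀ : ∀ u : LinearMap.range U, ‖φ₀ u‖ ≤ (‖f‖ * A⁻¹) * ‖u‖ := by
      intro u
      set x : X := e.symm u with hx
      have he : u = e x := (e.apply_symm_apply u).symm
      have hval : (u : lp (fun i => Y i) P) = U x := by
        rw [he]; exact LinearEquiv.ofInjective_apply U x
      have hnu : ‖u‖ = ‖U x‖ := by rw [← hval]; rfl
      have h1 : φ₀ u = f x := rfl
      have h2 : ‖x‖ ≤ A⁻¹ * ‖U x‖ := by
        rw [← inv_mul_le_iff₀ (by positivity : (0:ℝ) < A⁻¹), inv_inv]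
        exact hlow x
      calc ‖φ₀ u‖ = ‖f x‖ := by rw [h1]
        _ ≤ ‖f‖ * ‖x‖ := f.le_opNorm x
        _ ≤ ‖f‖ * (A⁻¹ * ‖U x‖) := mul_le_mul_of_nonneg_left h2 (norm_nonneg f)
        _ = (‖f‖ * A⁻¹) * ‖u‖ := by rw [hnu]; ring
    let φc : LinearMap.range U →L[ℝ] ℝ := LinearMap.mkContinuous φ₀ (‖f‖ * A⁻¹) hφ₀
    obtain ⟨Φ, hΦext, -⟩ := exists_extension_norm_eq (LinearMap.range U) φc
    set g : ∀ i, StrongDual ℝ (Y i) := fun i => Φ.comp (sgl P hp' i) with hgdef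
    have hgsum : Summable (fun i => ‖g i‖ ^ q) := by
      refine summable_of_sum_le (c := ‖Φ‖ ^ q) (fun i => Real.rpow_nonneg (norm_nonneg _) _) fun s => ?_
      exact coord_q_bound hcj hPt Φ s
    refine ⟨g, hgsum, ?_⟩
    have hS := (synthesis_summable hcj hB.le Λ hub hgsum).1
    ext x
    have h1 : HasSum (fun i => opAdj (Λ i) (g i) x) ((∑' i, opAdj (Λ i) (g i)) x) :=
      hasSum_eval hS.hasSum x
    have h2 : HasSum (fun i => lp.single P i ((U x) i)) (U x) :=
      lp.hasSum_single (by rw [hPdef]; exact ENNReal.ofReal_ne_top) (U x)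
    have h6 : HasSum (fun i => opAdj (Λ i) (g i) x) (Φ (U x)) := Φ.hasSum h2
    have h5 : Φ (U x) = f x := by
      have hmem : U x ∈ LinearMap.range U := LinearMap.mem_range_self U x
      have hext := hΦext ⟨U x, hmem⟩
      have hsub : (⟨U x, hmem⟩ : LinearMap.range U) = e x :=
        Subtype.ext (LinearEquiv.ofInjective_apply U x).symm
      calc Φ (U x) = φc ⟨U x, hmem⟩ := hext
        _ = φ₀ (e x) := by rw [hsub]; rfl
        _ = f (e.symm (e x)) := rfl
        _ = f x := by rw [e.symm_apply_apply]
    exact h1.unique (h5 ▸ h6)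
  · -- backward direction
    rintro ⟨h1, ⟨C, hC, h2⟩, h3⟩
    -- upper frame bound
    have memQ : ∀ gL : lp (fun i => StrongDual ℝ (Y i)) Q, Summable fun i => ‖gL i‖ ^ q := by
      intro gL
      have := (lp.memℓp gL).summable hq'
      simpa [hQt] using this
    have hub : ∀ x : X, ∀ s : Finset ℕ, ∑ i ∈ s, ‖Λ i x‖ ^ p ≤ (C * ‖x‖) ^ p := by
      intro x s
      have hdual : ∀ i, ∃ fi : StrongDual ℝ (Y i), ‖fi‖ ≤ 1 ∧ fi (Λ i x) = ‖Λ i x‖ := by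
        intro i
        by_cases h : Λ i x = 0
        · exact ⟨0, by simp, by simp [h]⟩
        · obtain ⟨fi, hf1, hf2⟩ := exists_dual_vector ℝ _ (norm_ne_zero_iff.2 h)
          exact ⟨fi, le_of_eq hf1, by exact_mod_cast hf2⟩
      choose φ hφ1 hφ2 using hdual
      set g : ∀ i, StrongDual ℝ (Y i) :=
        fun i => if i ∈ s then (‖Λ i x‖ ^ (p - 1)) • φ i else 0 with hgdef
      have hg0 : ∀ i ∉ s, g i = 0 := fun i hi => by simp [hgdef, hi]
      have hgq0 : ∀ i ∉ s, ‖g i‖ ^ q = 0 := fun i hi => by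
        rw [hg0 i hi, norm_zero, Real.zero_rpow hq0.ne']
      have hgnorm : ∀ i ∈ s, ‖g i‖ ^ q ≤ ‖Λ i x‖ ^ p := by
        intro i hi
        rw [hgdef]
        simp only [if_pos hi]
        rw [norm_smul, Real.norm_eq_abs,
          abs_of_nonneg (Real.rpow_nonneg (norm_nonneg _) _)]
        have hb : ‖Λ i x‖ ^ (p - 1) * ‖φ i‖ ≤ ‖Λ i x‖ ^ (p - 1) := by
          nlinarith [Real.rpow_nonneg (norm_nonneg (Λ i x)) (p - 1), hφ1 i, norm_nonneg (φ i)]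
        calc (‖Λ i x‖ ^ (p - 1) * ‖φ i‖) ^ q ≤ (‖Λ i x‖ ^ (p - 1)) ^ q :=
              Real.rpow_le_rpow (by positivity) hb hq0.le
          _ = ‖Λ i x‖ ^ ((p - 1) * q) := (Real.rpow_mul (norm_nonneg _) _ _).symm
          _ = ‖Λ i x‖ ^ p := by rw [hcj.sub_one_mul_conj]
      have hgsummable : Summable (fun i => ‖g i‖ ^ q) :=
        summable_of_ne_finset_zero hgq0
      have htsumgq : ∑' i, ‖g i‖ ^ q ≤ ∑ i ∈ s, ‖Λ i x‖ ^ p := by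
        rw [tsum_eq_sum hgq0]; exact Finset.sum_le_sum hgnorm
      have hTg0 : ∀ i ∉ s, opAdj (Λ i) (g i) = 0 := fun i hi => by
        rw [hg0 i hi, map_zero]
      set S : ℝ := ∑ i ∈ s, ‖Λ i x‖ ^ p with hSdef
      have hS0 : 0 ≤ S :=
        Finset.sum_nonneg fun i _ => Real.rpow_nonneg (norm_nonneg _) _
      have heval : S = (∑ i ∈ s, opAdj (Λ i) (g i)) x := by
        rw [ContinuousLinearMap.sum_apply, hSdef]
        refine Finset.sum_congr rfl fun i hi => ?_
        rw [opAdj_apply, hgdef]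
        simp only [if_pos hi]
        rw [ContinuousLinearMap.smul_apply, smul_eq_mul, hφ2 i]
        rcases eq_or_lt_of_le (norm_nonneg (Λ i x)) with h0 | h0
        · rw [← h0, Real.zero_rpow hp0.ne',
            Real.zero_rpow (by linarith : p - 1 ≠ 0), mul_zero]
        · rw [← Real.rpow_add_one h0.ne' (p - 1), sub_add_cancel]
      have hSle : S ≤ (C * ‖x‖) * S ^ (1 / q) := by
        have e1 : (∑' i, opAdj (Λ i) (g i)) = ∑ i ∈ s, opAdj (Λ i) (g i) := tsum_eq_sum hTg0
        have e2 : S ≤ ‖∑' i, opAdj (Λ i) (g i)‖ * ‖x‖ := by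
          rw [heval, ← e1]
          exact le_trans (le_abs_self _) ((∑' i, opAdj (Λ i) (g i)).le_opNorm x)
        have e3 : ‖∑' i, opAdj (Λ i) (g i)‖ ≤ C * S ^ (1 / q) := by
          refine (h2 g hgsummable).trans ?_
          refine mul_le_mul_of_nonneg_left ?_ hC.le
          exact Real.rpow_le_rpow (tsum_nonneg fun i => Real.rpow_nonneg (norm_nonneg _) _)
            htsumgq (by positivity)
        calc S ≤ ‖∑' i, opAdj (Λ i) (g i)‖ * ‖x‖ := e2
          _ ≤ (C * S ^ (1 / q)) * ‖x‖ := mul_le_mul_of_nonneg_right e3 (norm_nonneg x)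
          _ = (C * ‖x‖) * S ^ (1 / q) := by ring
      have hkey := rpow_le_of_le_mul_rpow hcj hS0 (by positivity) hSle
      calc S = (S ^ (1 / p)) ^ p := by
            rw [one_div, Real.rpow_inv_rpow hS0 hp0.ne']
        _ ≤ (C * ‖x‖) ^ p := Real.rpow_le_rpow (Real.rpow_nonneg hS0 _) hkey hp0.le
    have hsum : ∀ x : X, Summable (fun i => ‖Λ i x‖ ^ p) := fun x =>
      summable_of_sum_le (fun i => Real.rpow_nonneg (norm_nonneg _) _) (hub x)
    have hup : ∀ x : X, (∑' i, ‖Λ i x‖ ^ p) ^ (1 / p) ≤ C * ‖x‖ := by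
      intro x
      have ht : ∑' i, ‖Λ i x‖ ^ p ≤ (C * ‖x‖) ^ p := Summable.tsum_le_of_sum_le (hsum x) (hub x)
      calc (∑' i, ‖Λ i x‖ ^ p) ^ (1 / p) ≤ ((C * ‖x‖) ^ p) ^ (1 / p) :=
            Real.rpow_le_rpow (tsum_nonneg fun i => Real.rpow_nonneg (norm_nonneg _) _) ht
              (by positivity)
        _ = C * ‖x‖ := by rw [one_div, Real.rpow_rpow_inv (by positivity) hp0.ne']
    -- synthesis operator as a continuous linear map on `lp _ Q`
    let Tlin : lp (fun i => StrongDual ℝ (Y i)) Q →ₗ[ℝ] StrongDual ℝ X :=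
      { toFun := fun gL => ∑' i, opAdj (Λ i) (gL i)
        map_add' := fun a b => by
          dsimp only
          have ha := h1 _ (memQ a)
          have hb := h1 _ (memQ b)
          have : (fun i => opAdj (Λ i) ((a + b : lp (fun i => StrongDual ℝ (Y i)) Q) i)) =
              fun i => opAdj (Λ i) (a i) + opAdj (Λ i) (b i) := by
            funext i
            rw [lp.coeFn_add, Pi.add_apply, map_add]
          rw [this]
          exact Summable.tsum_add ha hb
        map_smul' := fun c a => by
          dsimp only
          have : (fun i => opAdj (Λ i) ((c • a : lp (fun i => StrongDual ℝ (Y i)) Q) i)) =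
              fun i => c • opAdj (Λ i) (a i) := by
            funext i
            rw [lp.coeFn_smul, Pi.smul_apply, map_smul]
          rw [this, RingHom.id_apply]
          exact ((h1 _ (memQ a)).hasSum.const_smul c).tsum_eq
          }
    let Tclm : lp (fun i => StrongDual ℝ (Y i)) Q →L[ℝ] StrongDual ℝ X :=
      LinearMap.mkContinuous Tlin C (fun gL => by
        calc ‖∑' i, opAdj (Λ i) (gL i)‖ ≤ C * (∑' i, ‖gL i‖ ^ q) ^ (1 / q) :=
              h2 _ (memQ gL)
          _ = C * ‖gL‖ := by rw [lp.norm_eq_tsum_rpow hq' gL, hQt])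
    have hsurj : Function.Surjective Tclm := by
      intro f
      obtain ⟨g, hgs, hgeq⟩ := h3 f
      exact ⟨⟨g, memℓp_gen (by simpa [hQt] using hgs)⟩, hgeq⟩
    obtain ⟨C', hC'pos, hC'⟩ := ContinuousLinearMap.exists_preimage_norm_le Tclm hsurj
    refine ⟨C'⁻¹, C, inv_pos.2 hC'pos, hC, fun x => ⟨hsum x, ?_, hup x⟩⟩
    rcases eq_or_ne x 0 with rfl | hx
    · rw [norm_zero, mul_zero]
      exact Real.rpow_nonneg (tsum_nonneg fun i => Real.rpow_nonneg (norm_nonneg _) _) _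
    obtain ⟨f, hf1, hf2⟩ := exists_dual_vector ℝ x (norm_ne_zero_iff.2 hx)
    obtain ⟨gL, hgL1, hgL2⟩ := hC' f
    have hgLnorm : ‖gL‖ ≤ C' := by rw [hf1, mul_one] at hgL2; exact hgL2
    have hsum1 : HasSum (fun i => gL i (Λ i x)) ((∑' i, opAdj (Λ i) (gL i)) x) :=
      hasSum_eval (h1 _ (memQ gL)).hasSum x
    have heval : ‖x‖ = ∑' i, gL i (Λ i x) := by
      have hTx : (∑' i, opAdj (Λ i) (gL i)) = f := hgL1
      rw [hsum1.tsum_eq, hTx]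
      exact_mod_cast hf2.symm
    have hold := Real.summable_and_inner_le_Lp_mul_Lq_tsum_of_nonneg hcj.symm
      (fun i => norm_nonneg (gL i)) (fun i => norm_nonneg (Λ i x)) (memQ gL) (hsum x)
    have hterm : ∑' i, gL i (Λ i x) ≤ ∑' i, ‖gL i‖ * ‖Λ i x‖ := by
      refine Summable.tsum_le_tsum (fun i => ?_) hsum1.summable hold.1
      exact le_trans (le_abs_self _) ((gL i).le_opNorm _)
    have hlast : ‖x‖ ≤ C' * (∑' i, ‖Λ i x‖ ^ p) ^ (1 / p) := by
      calc ‖x‖ = ∑' i, gL i (Λ i x) := heval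
        _ ≤ ∑' i, ‖gL i‖ * ‖Λ i x‖ := hterm
        _ ≤ (∑' i, ‖gL i‖ ^ q) ^ (1 / q) * (∑' i, ‖Λ i x‖ ^ p) ^ (1 / p) := hold.2
        _ ≤ C' * (∑' i, ‖Λ i x‖ ^ p) ^ (1 / p) := by
            refine mul_le_mul_of_nonneg_right ?_
              (Real.rpow_nonneg (tsum_nonneg fun i => Real.rpow_nonneg (norm_nonneg _) _) _)
            have : (∑' i, ‖gL i‖ ^ q) ^ (1 / q) = ‖gL‖ := by
              rw [lp.norm_eq_tsum_rpow hq' gL, hQt]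
            rw [this]
            exact hgLnorm
    rw [inv_mul_le_iff₀ hC'pos]
    exact hlast
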